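/- Let n ≥ 2, let A be an invertible n×n complex matrix, let u v : Fin n → ℂ be row vectors with expansion coefficients K_u = u ᵥ* A⁻¹ and K_v = v ᵥ* A⁻¹, and let j₁ j₂ : Fin n with j₁ ≠ j₂. Then det ((A.updateRow j₁ u).updateRow j₂ v) = (K_u j₁ * K_v j₂ − K_u j₂ * K_v j₁) * det A; i.e. replacing two distinct rows of A by u and v multiplies the determinant by the 2×2 minor of their expansion coefficients (double-excitation formula, Eq. (35)). -/

import Mathlib

open Matrix

private lemma updateRow_comm' {n : ℕ} (M : Matrix (Fin n) (Fin n) ℂ) {j₁ j₂ : Fin n}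
    (h : j₁ ≠ j₂) (a b : Fin n → ℂ) :
    (M.updateRow j₁ a).updateRow j₂ b = (M.updateRow j₂ b).updateRow j₁ a := by
  ext m l
  by_cases h1 : m = j₁ <;> by_cases h2 : m = j₂
  · exact absurd (h1.symm.trans h2) h
  · subst h1; simp [updateRow_ne h, updateRow_self]
  · subst h2; simp [updateRow_ne (Ne.symm h), updateRow_self]
  · simp [updateRow_ne h1, updateRow_ne h2]

private lemma det_updateRow_sum_smul {n : ℕ} (M : Matrix (Fin n) (Fin n) ℂ) (j : Fin n)
    (c : Fin n → ℂ) (w : Fin n → Fin n → ℂ) :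
    (M.updateRow j (∑ k, c k • w k)).det = ∑ k, c k * (M.updateRow j (w k)).det := by
  have h2 : ∀ x : Fin n → ℂ,
      (M.updateRow j x).det
        = (detRowAlternating : (Fin n → ℂ) [⋀^Fin n]→ₗ[ℂ] ℂ) (Function.update M j x) :=
    fun _ => rfl
  rw [h2, (detRowAlternating : (Fin n → ℂ) [⋀^Fin n]→ₗ[ℂ] ℂ).map_update_sum
    Finset.univ j (fun k => c k • w k) M]
  refine Finset.sum_congr rfl fun k _ => ?_
  rw [(detRowAlternating : (Fin n → ℂ) [⋀^Fin n]→ₗ[ℂ] ℂ).map_update_smul M j (c k) (w k)]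
  rw [h2, smul_eq_mul]

private lemma det_double_update {n : ℕ} (A : Matrix (Fin n) (Fin n) ℂ)
    (j₁ j₂ i k : Fin n) (hj : j₁ ≠ j₂) :
    ((A.updateRow j₂ (A k)).updateRow j₁ (A i)).det =
      (if i = j₁ then (if k = j₂ then A.det else 0) else 0)
      + (if i = j₂ then (if k = j₁ then -A.det else 0) else 0) := by
  set M := (A.updateRow j₂ (A k)).updateRow j₁ (A i) with hM
  have hMj₁ : M j₁ = A i := by simp [hM]
  have hMj₂ : M j₂ = A k := by simp [hM, updateRow_ne hj.symm]
  have hMo : ∀ m, m ≠ j₁ → m ≠ j₂ → M m = A m := by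
    intro m h1 h2; simp [hM, updateRow_ne h1, updateRow_ne h2]
  by_cases hik : i = k
  · rw [det_zero_of_row_eq hj (by rw [hMj₁, hMj₂, hik])]
    by_cases h1 : i = j₁
    · have hk2 : ¬ k = j₂ := fun h => hj ((h1.symm.trans hik).trans h)
      simp [h1, hk2, hj, Ne.symm hj]
    · by_cases h2 : i = j₂
      · have hk1 : ¬ k = j₁ := fun h => hj (h.symm.trans (hik.symm.trans h2))
        simp [h1, h2, hk1, hj, Ne.symm hj]
      · simp [h1, h2, hj, Ne.symm hj]
  · by_cases h1 : i = j₁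
    · by_cases hk : k = j₂
      · have : M = A := by rw [hM, hk, updateRow_eq_self, h1, updateRow_eq_self]
        rw [this]
        simp [h1, hk, hj, Ne.symm hj]
      · have hk1 : k ≠ j₁ := fun h => hik (h1.trans h.symm)
        rw [det_zero_of_row_eq (show j₂ ≠ k from fun h => hk h.symm)
          (by rw [hMj₂, hMo k hk1 hk])]
        simp [h1, hk, hj, Ne.symm hj]
    · by_cases h2 : i = j₂
      · by_cases hk : k = j₁
        · have hswap : M = A.submatrix (Equiv.swap j₁ j₂) id := by
            ext m l
            rcases eq_or_ne m j₁ with rfl | hm1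
            · rw [submatrix_apply, Equiv.swap_apply_left, id]
              rw [hMj₁, h2]
            · rcases eq_or_ne m j₂ with rfl | hm2
              · rw [submatrix_apply, Equiv.swap_apply_right, id]
                rw [hMj₂, hk]
              · rw [submatrix_apply, Equiv.swap_apply_of_ne_of_ne hm1 hm2, id]
                rw [hMo m hm1 hm2]
          rw [hswap, det_permute, Equiv.Perm.sign_swap hj]
          simp [h1, h2, hk, hj, Ne.symm hj]
        · have hk2 : k ≠ j₂ := fun h => hik (h2.trans h.symm)
          rw [det_zero_of_row_eq (show j₂ ≠ k from fun h => hk2 h.symm)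
            (by rw [hMj₂, hMo k hk hk2])]
          simp [h1, h2, hk, hj, Ne.symm hj]
      · rw [det_zero_of_row_eq (show j₁ ≠ i from fun h => h1 h.symm)
          (by rw [hMj₁, hMo i h1 h2])]
        simp [h1, h2, hj, Ne.symm hj]

/-- **Double-excitation formula, Eq. (35)**: replacing two distinct rows of an
invertible matrix `A` by `u` and `v` multiplies the determinant by the 2×2
minor of their expansion coefficients in the rows of `A`. -/
theorem double_excitation_det
    {n : ℕ} (hn : 2 ≤ n)
    (A : Matrix (Fin n) (Fin n) ℂ) (hA : IsUnit A.det)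
    (u v : Fin n → ℂ) (Ku Kv : Fin n → ℂ)
    (hKu : Ku = u ᵥ* A⁻¹) (hKv : Kv = v ᵥ* A⁻¹)
    (j₁ j₂ : Fin n) (hj : j₁ ≠ j₂) :
    ((A.updateRow j₁ u).updateRow j₂ v).det
      = (Ku j₁ * Kv j₂ - Ku j₂ * Kv j₁) * A.det := by
  have hsum : ∀ c : Fin n → ℂ, c ᵥ* A = ∑ i, c i • A i := by
    intro c; funext l
    simp [vecMul, dotProduct, Finset.sum_apply]
  have hu : u = ∑ i, Ku i • A i := by
    rw [← hsum, hKu, vecMul_vecMul, nonsing_inv_mul A hA, vecMul_one]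
  have hv : v = ∑ k, Kv k • A k := by
    rw [← hsum, hKv, vecMul_vecMul, nonsing_inv_mul A hA, vecMul_one]
  calc ((A.updateRow j₁ u).updateRow j₂ v).det
      = ∑ k, Kv k * ((A.updateRow j₁ u).updateRow j₂ (A k)).det := by
        rw [hv]; exact det_updateRow_sum_smul _ _ _ _
    _ = ∑ k, Kv k * ((A.updateRow j₂ (A k)).updateRow j₁ u).det := by
        refine Finset.sum_congr rfl fun k _ => ?_
        rw [updateRow_comm' A hj]
    _ = ∑ k, Kv k * ∑ i, Ku i * ((A.updateRow j₂ (A k)).updateRow j₁ (A i)).det := by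
        refine Finset.sum_congr rfl fun k _ => ?_
        rw [hu]; exact congrArg _ (det_updateRow_sum_smul _ _ _ _)
    _ = (Ku j₁ * Kv j₂ - Ku j₂ * Kv j₁) * A.det := by
        simp only [det_double_update A j₁ j₂ _ _ hj, mul_add, mul_ite, mul_zero,
          Finset.sum_add_distrib, Finset.sum_ite_eq', Finset.mem_univ, if_true]
        ring
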